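/- Let φ and ψ be anisotropic quasilinear p-forms over F (i.e. φ(v) = 0 implies v = 0, and similarly for ψ). Then there exists an injective F-linear map f : V_ψ → V_φ with φ ∘ f = ψ if and only if D_F(ψ) ⊆ D_F(φ). -/

import Mathlib

/-- An anisotropic quasilinear p-form ψ embeds into an anisotropic quasilinear
p-form φ if and only if D_F(ψ) ⊆ D_F(φ). -/
theorem subform_iff_value_sets_contained
    {F V U : Type*} [Field F]
    [AddCommGroup V] [Module F V] [FiniteDimensional F V]
    [AddCommGroup U] [Module F U] [FiniteDimensional F U]
    (p : ℕ) (hp : 0 < p) [CharP F p]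
    (φ : V → F)
    (hφsmul : ∀ (c : F) (v : V), φ (c • v) = c ^ p * φ v)
    (hφadd : ∀ v w : V, φ (v + w) = φ v + φ w)
    (hφan : ∀ v : V, φ v = 0 → v = 0)
    (ψ : U → F)
    (hψsmul : ∀ (c : F) (u : U), ψ (c • u) = c ^ p * ψ u)
    (hψadd : ∀ u w : U, ψ (u + w) = ψ u + ψ w)
    (hψan : ∀ u : U, ψ u = 0 → u = 0) :
    (∃ f : U →ₗ[F] V, Function.Injective f ∧ ∀ u, φ (f u) = ψ u) ↔
      Set.range ψ ⊆ Set.range φ := by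
  constructor
  · rintro ⟨f, hf, hfφ⟩ x ⟨u, rfl⟩
    exact ⟨f u, hfφ u⟩
  · intro h
    -- φ is injective
    have hinj : Function.Injective φ := by
      intro v w hvw
      have hsub : φ (v - w) = 0 := by
        have h1 := hφadd (v - w) w
        rw [sub_add_cancel, hvw] at h1
        exact (right_eq_add.mp h1)
      have := hφan _ hsub
      exact sub_eq_zero.mp this
    -- choose preimages
    choose g hg using fun u : U => h ⟨u, rfl⟩
    refine ⟨⟨⟨g, ?_⟩, ?_⟩, ?_, fun u => hg u⟩
    · intro u w
      apply hinj
      rw [hφadd, hg, hg, hg, hψadd]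
    · intro c u
      apply hinj
      simp only [RingHom.id_apply]
      rw [hφsmul, hg, hg, hψsmul]
    · intro u w huw
      have hgeq : g u = g w := huw
      have hval : ψ u = ψ w := by rw [← hg, ← hg, hgeq]
      have h0 : ψ (u - w) = 0 := by
        have h4 := hψadd (u - w) w
        rw [sub_add_cancel, hval] at h4
        exact (right_eq_add.mp h4)
      exact sub_eq_zero.mp (hψan _ h0)
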